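/- Let h : 2^{{X,Y,Z,U}} → ℝ be a polymatroid on the four-element set {X, Y, Z, U}. Then 3·h({X,Y}) + 2·h({Y,Z}) + 3·h({Z,U}) − 2·h({Y}) − 2·h({Z}) ≥ 3·h({X,Y,Z,U}). (This is the Shannon inequality underlying the q-inequality |J3| ≤ |R|^{1/3} · ‖deg_R(X|Y)‖_2^{2/3} · ‖deg_S(Z|Y)‖_2^{2/3} · ‖deg_T(U|Z)‖_3 for the three-way join.) -/
import Mathlib

/-- The Shannon inequality
`3·h({X,Y}) + 2·h({Y,Z}) + 3·h({Z,U}) − 2·h({Y}) − 2·h({Z}) ≥ 3·h({X,Y,Z,U})`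
for any polymatroid `h` on the four-element set `{X, Y, Z, U}` (modeled as `Fin 4`
with `X = 0`, `Y = 1`, `Z = 2`, `U = 3`). -/
theorem shannon_inequality_three_way_join (h : Finset (Fin 4) → ℝ)
    (h0 : h ∅ = 0)
    (hmono : ∀ U U' : Finset (Fin 4), U ⊆ U' → h U ≤ h U')
    (hsub : ∀ U U' : Finset (Fin 4), h (U ∪ U') + h (U ∩ U') ≤ h U + h U') :
    3 * h {0, 1} + 2 * h {1, 2} + 3 * h {2, 3} - 2 * h {1} - 2 * h {2}
      ≥ 3 * h {0, 1, 2, 3} := by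
  have s1 := hsub {0,1} {1,2}
  have s2 := hsub {0,1,2} {2,3}
  have s3 := hsub {0,1} {2,3}
  have e1 : ({0,1} ∪ {1,2} : Finset (Fin 4)) = {0,1,2} := by decide
  have e2 : ({0,1} ∩ {1,2} : Finset (Fin 4)) = {1} := by decide
  have e3 : ({0,1,2} ∪ {2,3} : Finset (Fin 4)) = {0,1,2,3} := by decide
  have e4 : ({0,1,2} ∩ {2,3} : Finset (Fin 4)) = {2} := by decide
  have e5 : ({0,1} ∪ {2,3} : Finset (Fin 4)) = {0,1,2,3} := by decide
  have e6 : ({0,1} ∩ {2,3} : Finset (Fin 4)) = ∅ := by decide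
  rw [e1, e2] at s1
  rw [e3, e4] at s2
  rw [e5, e6] at s3
  linarith
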